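/- There exist constants C > 0 and γ₀ > 0 such that for every complex number ζ = γ + iδ with γ = Re ζ ≥ γ₀ one has |‖φ_ζ^+‖² − γ^{−1}| ≤ C e^{−4γ} and |⟨φ_ζ^+, φ_ζ^−⟩| ≤ C e^{−2γ}. -/

import Mathlib

open Set Filter MeasureTheory

lemma normSq_sinh' (z : ℂ) : Complex.normSq (Complex.sinh z) =
    (Real.cosh (2*z.re) - Real.cos (2*z.im)) / 2 := by
  have h : Complex.sinh z = (Complex.exp z - Complex.exp (-z)) / 2 := rfl
  rw [h, map_div₀, Complex.normSq_sub]
  have h1 : Complex.normSq (Complex.exp z) = Real.exp (2*z.re) := by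
    rw [Complex.normSq_eq_norm_sq, Complex.norm_exp, ← Real.exp_nat_mul]; norm_num [mul_comm]
  have h2 : Complex.normSq (Complex.exp (-z)) = Real.exp (-(2*z.re)) := by
    rw [Complex.normSq_eq_norm_sq, Complex.norm_exp, ← Real.exp_nat_mul, Complex.neg_re]
    norm_num [mul_comm]
  have h3 : (Complex.exp z * (starRingEnd ℂ) (Complex.exp (-z))).re = Real.cos (2*z.im) := by
    rw [← Complex.exp_conj, ← Complex.exp_add]
    have : z + (starRingEnd ℂ) (-z) = ((2 * z.im : ℝ) : ℂ) * Complex.I := by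
      rw [map_neg, ← Complex.sub_conj]; ring
    rw [this, Complex.exp_ofReal_mul_I_re]
  rw [h1, h2, h3, Real.cosh_eq]
  have : Complex.normSq 2 = 4 := by norm_num [Complex.normSq_apply]
  rw [this]; ring

lemma norm_sinh_le (z : ℂ) : ‖Complex.sinh z‖ ≤ (Real.exp z.re + Real.exp (-z.re)) / 2 := by
  rw [show Complex.sinh z = (Complex.exp z - Complex.exp (-z)) / 2 from rfl]
  calc ‖(Complex.exp z - Complex.exp (-z)) / 2‖
      ≤ (‖Complex.exp z‖ + ‖Complex.exp (-z)‖) / 2 := by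
        rw [norm_div, Complex.norm_ofNat]
        gcongr
        exact norm_sub_le _ _
    _ = (Real.exp z.re + Real.exp (-z.re)) / 2 := by
        simp [Complex.norm_exp]

/-- The function `φ_ζ^+`. -/
noncomputable def phiP (ζ : ℂ) (x : ℝ) : ℂ :=
  if x < -1 then 0
  else if x ≤ 1 then Complex.sinh (ζ * (x + 1)) / Complex.sinh (2 * ζ)
  else Complex.exp (-ζ * (x - 1))

/-- The function `φ_ζ^−(x) = φ_ζ^+(−x)`. -/
noncomputable def phiM (ζ : ℂ) (x : ℝ) : ℂ := phiP ζ (-x)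

set_option maxHeartbeats 1000000 in
theorem stmt4 :
    ∃ C > (0 : ℝ), ∃ γ₀ > (0 : ℝ), ∀ ζ : ℂ, γ₀ ≤ ζ.re →
      |(∫ x : ℝ, ‖phiP ζ x‖ ^ 2) - (ζ.re)⁻¹| ≤ C * Real.exp (-(4 * ζ.re)) ∧
      ‖∫ x : ℝ, (starRingEnd ℂ) (phiP ζ x) * phiM ζ x‖ ≤
        C * Real.exp (-(2 * ζ.re)) := by
  refine ⟨16, by norm_num, 1, one_pos, fun ζ hγ1 => ?_⟩
  set γ := ζ.re with hγdef
  set δ := ζ.im with hδdef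
  have hγ0 : (0:ℝ) < γ := lt_of_lt_of_le one_pos hγ1
  set S := Complex.sinh (2 * ζ) with hS
  set Nsq := Complex.normSq S with hNsqdef
  have hNsq_eq : Nsq = (Real.cosh (4*γ) - Real.cos (4*δ)) / 2 := by
    rw [hNsqdef, hS, normSq_sinh']
    norm_num [Complex.mul_re, Complex.mul_im]
    ring_nf
    rfl
  have hE4 : (4:ℝ) ≤ Real.exp (4*γ) := by
    nlinarith [Real.add_one_le_exp (4*γ)]
  have hEpos : (0:ℝ) < Real.exp (4*γ) := Real.exp_pos _
  have hNsq_ge : Real.exp (4*γ) / 8 ≤ Nsq := by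
    rw [hNsq_eq, Real.cosh_eq]
    nlinarith [Real.exp_pos (-(4*γ)), Real.cos_le_one (4*δ)]
  have hNsq_pos : (0:ℝ) < Nsq := lt_of_lt_of_le (by positivity) hNsq_ge
  have hS_ne : S ≠ 0 := by
    have := hNsq_pos
    rw [hNsqdef, Complex.normSq_pos] at this; exact this
  -- branch facts
  have hb0 : ∀ x : ℝ, x ≤ -1 → phiP ζ x = 0 := by
    intro x hx
    rcases lt_or_eq_of_le hx with h | h
    · rw [phiP, if_pos h]
    · rw [phiP, if_neg (by simp [h]), if_pos (by rw [h]; norm_num)]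
      rw [h]
      norm_num
  have hbm : ∀ x : ℝ, -1 < x → x ≤ 1 → phiP ζ x = Complex.sinh (ζ * (x + 1)) / S := by
    intro x h1 h2; rw [phiP, if_neg (by linarith), if_pos h2]
  have hbt : ∀ x : ℝ, 1 < x → phiP ζ x = Complex.exp (-ζ * (x - 1)) := by
    intro x h; rw [phiP, if_neg (by linarith), if_neg (by linarith)]
  -- norm formulas
  have hre : ∀ x : ℝ, (ζ * ((x:ℂ) + 1)).re = γ * (x + 1) := by
    intro x; simp [Complex.mul_re]; exact Or.inl rfl
  have him : ∀ x : ℝ, (ζ * ((x:ℂ) + 1)).im = δ * (x + 1) := by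
    intro x; simp [Complex.mul_im]; exact Or.inl rfl
  have hnm : ∀ x : ℝ, -1 < x → x ≤ 1 → ‖phiP ζ x‖ ^ 2 =
      (Real.cosh (2*γ*x + 2*γ) - Real.cos (2*δ*x + 2*δ)) / 2 / Nsq := by
    intro x h1 h2
    rw [hbm x h1 h2, norm_div, div_pow]
    congr 1
    · rw [Complex.sq_norm, normSq_sinh', hre, him]
      ring_nf
    · rw [Complex.sq_norm]
  have hnt : ∀ x : ℝ, 1 < x → ‖phiP ζ x‖ ^ 2 =
      Real.exp (2*γ) * Real.exp (-(2*γ) * x) := by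
    intro x h
    rw [hbt x h, Complex.norm_exp, ← Real.exp_nat_mul, ← Real.exp_add]
    congr 1
    have : (-ζ * ((x:ℂ) - 1)).re = -γ * (x - 1) := by simp [Complex.mul_re]; exact Or.inl rfl
    rw [this]; push_cast; ring
  -- interval integrals
  set Ic : ℝ := ∫ x in (-1:ℝ)..1, Real.cos (2*δ*x + 2*δ) with hIcdef
  have hIc : |Ic| ≤ 2 := by
    have h := intervalIntegral.norm_integral_le_of_norm_le_const (C := 1) (a := (-1:ℝ)) (b := 1)
      (f := fun x => Real.cos (2*δ*x + 2*δ)) (fun x _ => by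
        rw [Real.norm_eq_abs]; exact Real.abs_cos_le_one _)
    refine le_trans ?_ (by norm_num : (1:ℝ) * |1 - (-1:ℝ)| ≤ 2)
    rw [hIcdef, ← Real.norm_eq_abs]
    exact h
  have Icosh : ∫ x in (-1:ℝ)..1, Real.cosh (2*γ*x + 2*γ) = Real.sinh (4*γ) / (2*γ) := by
    have hd : ∀ x ∈ uIcc (-1:ℝ) 1, HasDerivAt (fun y : ℝ => Real.sinh (2*γ*y + 2*γ) / (2*γ))
        (Real.cosh (2*γ*x + 2*γ)) x := by
      intro x _
      have h1 : HasDerivAt (fun y : ℝ => 2*γ*y + 2*γ) (2*γ) x := by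
        simpa using ((hasDerivAt_id x).const_mul (2*γ)).add_const (2*γ)
      have h2 := (Real.hasDerivAt_sinh (2*γ*x + 2*γ)).comp x h1
      have h3 := h2.div_const (2*γ)
      refine h3.congr_deriv ?_
      field_simp
    rw [intervalIntegral.integral_eq_sub_of_hasDerivAt hd
      ((Real.continuous_cosh.comp (by fun_prop)).intervalIntegrable _ _)]
    norm_num
    rw [show (2*γ + 2*γ : ℝ) = 4*γ by ring]
  -- piece integrals
  have hIoc_eq : ∫ x in Ioc (-1:ℝ) 1, ‖phiP ζ x‖ ^ 2 =
      (Real.sinh (4*γ) / (2*γ) - Ic) / (2 * Nsq) := by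
    rw [setIntegral_congr_fun measurableSet_Ioc (fun x hx => hnm x hx.1 hx.2),
      ← intervalIntegral.integral_of_le (by norm_num : (-1:ℝ) ≤ 1)]
    have hi1 : IntervalIntegrable (fun x : ℝ => Real.cosh (2*γ*x + 2*γ)) volume (-1) 1 :=
      (Real.continuous_cosh.comp (by fun_prop)).intervalIntegrable _ _
    have hi2 : IntervalIntegrable (fun x : ℝ => Real.cos (2*δ*x + 2*δ)) volume (-1) 1 :=
      (Real.continuous_cos.comp (by fun_prop)).intervalIntegrable _ _
    simp_rw [div_div]
    rw [intervalIntegral.integral_div, intervalIntegral.integral_sub hi1 hi2, Icosh, ← hIcdef]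
  have hIoi_eq : ∫ x in Ioi (1:ℝ), ‖phiP ζ x‖ ^ 2 = 1 / (2*γ) := by
    rw [setIntegral_congr_fun measurableSet_Ioi (fun x hx => hnt x hx)]
    have h2γ : (0:ℝ) < 2*γ := by linarith
    have hder : ∀ x ∈ Ici (1:ℝ), HasDerivAt
        (fun y : ℝ => -(Real.exp (2*γ) * Real.exp (-(2*γ) * y)) / (2*γ))
        (Real.exp (2*γ) * Real.exp (-(2*γ) * x)) x := by
      intro x _
      have h1 : HasDerivAt (fun y : ℝ => -(2*γ) * y) (-(2*γ)) x := by
        simpa using (hasDerivAt_id x).const_mul (-(2*γ))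
      have h2 := (Real.hasDerivAt_exp (-(2*γ) * x)).comp x h1
      have h3 := ((h2.const_mul (Real.exp (2*γ))).neg).div_const (2*γ)
      refine h3.congr_deriv ?_
      field_simp
    have hint : IntegrableOn (fun x : ℝ => Real.exp (2*γ) * Real.exp (-(2*γ) * x)) (Ioi 1) :=
      (exp_neg_integrableOn_Ioi 1 h2γ).const_mul _
    have htend : Tendsto (fun y : ℝ => -(Real.exp (2*γ) * Real.exp (-(2*γ) * y)) / (2*γ))
        atTop (nhds 0) := by
      have h1 : Tendsto (fun y : ℝ => -(2*γ) * y) atTop atBot :=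
        Tendsto.const_mul_atTop_of_neg (by linarith) tendsto_id
      have h2 := Real.tendsto_exp_atBot.comp h1
      have h3 := ((h2.const_mul (Real.exp (2*γ))).neg).div_const (2*γ)
      simpa using h3
    rw [MeasureTheory.integral_Ioi_of_hasDerivAt_of_tendsto' hder hint htend]
    rw [← Real.exp_add]
    norm_num
    ring
  have hIic_eq : ∫ x in Iic (-1:ℝ), ‖phiP ζ x‖ ^ 2 = 0 := by
    rw [setIntegral_congr_fun (g := fun _ => (0:ℝ)) measurableSet_Iic
      (fun x hx => by rw [hb0 x hx]; simp)]
    simp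
  -- integrability
  have hJ0 : IntegrableOn (fun x => ‖phiP ζ x‖ ^ 2) (Iic (-1:ℝ)) := by
    exact integrableOn_zero.congr_fun (fun x hx => by rw [hb0 x hx]; simp) measurableSet_Iic
  have hJ1 : IntegrableOn (fun x => ‖phiP ζ x‖ ^ 2) (Ioc (-1:ℝ) 1) := by
    have hc : Continuous (fun x : ℝ => (Real.cosh (2*γ*x + 2*γ) - Real.cos (2*δ*x + 2*δ)) / 2 / Nsq) := by
      fun_prop
    exact (hc.integrableOn_Ioc).congr_fun (fun x hx => (hnm x hx.1 hx.2).symm) measurableSet_Ioc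
  have hJ2 : IntegrableOn (fun x => ‖phiP ζ x‖ ^ 2) (Ioi (1:ℝ)) := by
    have : IntegrableOn (fun x : ℝ => Real.exp (2*γ) * Real.exp (-(2*γ) * x)) (Ioi 1) :=
      (exp_neg_integrableOn_Ioi 1 (by linarith : (0:ℝ) < 2*γ)).const_mul _
    exact this.congr_fun (fun x hx => (hnt x hx).symm) measurableSet_Ioi
  have hu : Iic (-1:ℝ) ∪ (Ioc (-1) 1 ∪ Ioi 1) = univ := by
    ext x
    simp only [mem_union, mem_Iic, mem_Ioc, mem_Ioi, mem_univ, iff_true]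
    by_cases h : x ≤ -1
    · exact Or.inl h
    · push_neg at h
      by_cases h2 : x ≤ 1
      · exact Or.inr (Or.inl ⟨h, h2⟩)
      · push_neg at h2; exact Or.inr (Or.inr h2)
  have hd1 : Disjoint (Iic (-1:ℝ)) (Ioc (-1) 1 ∪ Ioi 1) := by
    rw [disjoint_left]
    intro x hx h
    simp only [mem_union, mem_Ioc, mem_Ioi] at h
    simp only [mem_Iic] at hx
    rcases h with ⟨h1, _⟩ | h1 <;> linarith
  have hd2 : Disjoint (Ioc (-1:ℝ) 1) (Ioi 1) := by
    rw [disjoint_left]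
    rintro x hx h1
    simp at hx h1
    linarith [hx.2]
  have hsplit : ∫ x : ℝ, ‖phiP ζ x‖ ^ 2 =
      (∫ x in Iic (-1:ℝ), ‖phiP ζ x‖ ^ 2) + ((∫ x in Ioc (-1:ℝ) 1, ‖phiP ζ x‖ ^ 2)
        + ∫ x in Ioi (1:ℝ), ‖phiP ζ x‖ ^ 2) := by
    rw [← setIntegral_univ (f := fun x : ℝ => ‖phiP ζ x‖ ^ 2), ← hu,
      setIntegral_union hd1 (measurableSet_Ioc.union measurableSet_Ioi) hJ0 (hJ1.union hJ2),
      setIntegral_union hd2 measurableSet_Ioi hJ1 hJ2]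
  have hI : ∫ x : ℝ, ‖phiP ζ x‖ ^ 2 =
      (Real.sinh (4*γ) / (2*γ) - Ic) / (2 * Nsq) + 1 / (2*γ) := by
    rw [hsplit, hIic_eq, hIoc_eq, hIoi_eq]; ring
  constructor
  · -- first estimate
    set E := Real.exp (4*γ) with hEdef
    have hsinh4 : Real.sinh (4*γ) = (E - E⁻¹) / 2 := by
      rw [Real.sinh_eq, Real.exp_neg, hEdef]
    have hcosh4 : Real.cosh (4*γ) = (E + E⁻¹) / 2 := by
      rw [Real.cosh_eq, Real.exp_neg, hEdef]
    have hEne : E ≠ 0 := ne_of_gt hEpos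
    have hDpos : (0:ℝ) < Real.cosh (4*γ) - Real.cos (4*δ) := by
      nlinarith [hNsq_pos, hNsq_eq]
    have hAD : Real.cos (4*δ) - E⁻¹ = Real.sinh (4*γ) - 2 * Nsq := by
      rw [hNsq_eq, hsinh4, hcosh4]; ring
    have key : (∫ x : ℝ, ‖phiP ζ x‖ ^ 2) - γ⁻¹ =
        ((Real.cos (4*δ) - E⁻¹) / 2 - γ * Ic) / (2 * Nsq * γ) := by
      rw [hI, hAD]
      field_simp
      ring
    rw [key, abs_div, abs_of_pos (show (0:ℝ) < 2 * Nsq * γ by positivity)]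
    have hEinv1 : E⁻¹ ≤ 1 := by
      rw [inv_le_one_iff₀]; right; linarith
    have hEinv0 : (0:ℝ) < E⁻¹ := by positivity
    have hnum : |(Real.cos (4*δ) - E⁻¹) / 2 - γ * Ic| ≤ 1 + 2*γ := by
      rw [abs_le] at hIc ⊢
      constructor <;> nlinarith [Real.neg_one_le_cos (4*δ), Real.cos_le_one (4*δ), hIc.1, hIc.2]
    have hden : γ * E / 4 ≤ 2 * Nsq * γ := by nlinarith [hNsq_ge]
    calc |(Real.cos (4*δ) - E⁻¹) / 2 - γ * Ic| / (2 * Nsq * γ)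
        ≤ (1 + 2*γ) / (γ * E / 4) :=
          div_le_div₀ (by linarith) hnum (by positivity) hden
      _ ≤ 16 * Real.exp (-(4*γ)) := by
          rw [Real.exp_neg, ← hEdef, div_le_iff₀ (by positivity)]
          have h1 : E⁻¹ * E = 1 := inv_mul_cancel₀ hEne
          nlinarith [hγ1]
  · -- second estimate
    have hg0 : ∀ x : ℝ, x ∉ Ioc (-1:ℝ) 1 →
        (starRingEnd ℂ) (phiP ζ x) * phiM ζ x = 0 := by
      intro x hx
      rw [mem_Ioc, not_and_or] at hx
      rcases hx with h | h
      · push_neg at h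
        rw [hb0 x (by linarith)]
        simp
      · push_neg at h
        have : phiM ζ x = 0 := by
          rw [phiM, hb0 (-x) (by linarith)]
        rw [this, mul_zero]
    rw [← setIntegral_eq_integral_of_forall_compl_eq_zero hg0]
    have hbound : ∀ x ∈ Ioc (-1:ℝ) 1,
        ‖(starRingEnd ℂ) (phiP ζ x) * phiM ζ x‖ ≤ Real.exp (2*γ) / Nsq := by
      intro x hx
      have hx1 : -1 < x := hx.1
      have hx2 : x ≤ 1 := hx.2
      have hM : phiM ζ x = Complex.sinh (ζ * ((-x:ℝ) + 1)) / S := by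
        rcases lt_or_eq_of_le hx2 with h | h
        · rw [phiM, hbm (-x) (by linarith) (by linarith)]
        · subst h
          rw [phiM, hb0 (-1) le_rfl]
          norm_num
      rw [hbm x hx1 hx2, hM, norm_mul, RingHomIsometric.norm_map]
      rw [norm_div, norm_div]
      have hS2 : ‖S‖ * ‖S‖ = Nsq := by
        rw [hNsqdef, ← Complex.sq_norm, sq]
      rw [div_mul_div_comm, hS2]
      have hA : ‖Complex.sinh (ζ * ((x:ℂ) + 1))‖ ≤ Real.exp (γ * (x + 1)) := by
        refine (norm_sinh_le _).trans ?_
        rw [hre]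
        have h0 : (0:ℝ) ≤ γ * (x + 1) := by nlinarith
        have := Real.exp_le_exp.mpr (by linarith : -(γ*(x+1)) ≤ γ*(x+1))
        linarith
      have hB : ‖Complex.sinh (ζ * (((-x:ℝ):ℂ) + 1))‖ ≤ Real.exp (γ * (-x + 1)) := by
        refine (norm_sinh_le _).trans ?_
        rw [hre]
        have h0 : (0:ℝ) ≤ γ * (-x + 1) := by nlinarith
        have := Real.exp_le_exp.mpr (by linarith : -(γ*(-x+1)) ≤ γ*(-x+1))
        linarith
      gcongr
      calc ‖Complex.sinh (ζ * ((x:ℂ) + 1))‖ * ‖Complex.sinh (ζ * (((-x:ℝ):ℂ) + 1))‖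
          ≤ Real.exp (γ * (x + 1)) * Real.exp (γ * (-x + 1)) :=
            mul_le_mul hA hB (norm_nonneg _) (Real.exp_nonneg _)
        _ = Real.exp (2*γ) := by rw [← Real.exp_add]; congr 1; ring
    have h2 := norm_setIntegral_le_of_norm_le_const (μ := volume)
      (s := Ioc (-1:ℝ) 1) (C := Real.exp (2*γ) / Nsq)
      (by rw [Real.volume_Ioc]; exact ENNReal.ofReal_lt_top) hbound
    have hvol : volume.real (Ioc (-1:ℝ) 1) = 2 := by
      rw [measureReal_def, Real.volume_Ioc]
      norm_num
    rw [hvol] at h2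
    refine h2.trans ?_
    rw [div_mul_eq_mul_div, div_le_iff₀ hNsq_pos]
    have h3 : Real.exp (2*γ) * 2 ≤ 16 * Real.exp (-(2*γ)) * (Real.exp (4*γ) / 8) := by
      rw [show 16 * Real.exp (-(2*γ)) * (Real.exp (4*γ) / 8) =
        2 * (Real.exp (-(2*γ)) * Real.exp (4*γ)) from by ring, ← Real.exp_add]
      rw [show -(2*γ) + 4*γ = 2*γ by ring]
      linarith
    nlinarith [hNsq_ge, Real.exp_pos (-(2*γ)), Real.exp_pos (2*γ)]
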